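/- For the skew-Laplace family, the perturbation measure has the closed form M_TV(λ) = (1/2) · λ/(1 + |λ|) for every λ ∈ ℝ; that is, sign(λ) · (1/2) ∫_ℝ |2 G_L(λ x) − 1| f_L(x) dx = (1/2) · λ/(1 + |λ|), where f_L(x) = (1/2) e^{−|x|} and G_L(t) = ∫_{−∞}^t f_L(u) du. -/

import Mathlib

open MeasureTheory Real

/-- The standard Laplace density. -/
noncomputable def laplacePdf (x : ℝ) : ℝ := (1 / 2) * Real.exp (-|x|)

/-- The standard Laplace cumulative distribution function. -/
noncomputable def laplaceCdf (t : ℝ) : ℝ := ∫ u in Set.Iic t, laplacePdf u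

lemma integral_exp_Ioi_scaled {b : ℝ} (hb : 0 < b) :
    ∫ x in Set.Ioi (0:ℝ), Real.exp (-(b * x)) = b⁻¹ := by
  have h := integral_comp_mul_left_Ioi (fun y => Real.exp (-y)) 0 hb
  simp only [mul_zero, smul_eq_mul] at h
  rw [h, integral_exp_neg_Ioi_zero, mul_one]

lemma laplaceCdf_of_nonpos {t : ℝ} (ht : t ≤ 0) :
    laplaceCdf t = (1 / 2) * Real.exp t := by
  unfold laplaceCdf laplacePdf
  rw [setIntegral_congr_fun measurableSet_Iic
    (g := fun u => (1 / 2 : ℝ) * Real.exp u) (fun u hu => by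
      have : u ≤ 0 := le_trans hu ht
      rw [abs_of_nonpos this, neg_neg])]
  rw [integral_const_mul, integral_exp_Iic]

lemma integrable_laplacePdf : Integrable laplacePdf := by
  have hIoi : IntegrableOn laplacePdf (Set.Ioi (0:ℝ)) := by
    refine IntegrableOn.congr_fun ((exp_neg_integrableOn_Ioi 0 one_pos).const_mul (1 / 2))
      (fun x hx => ?_) measurableSet_Ioi
    simp [laplacePdf, abs_of_pos (Set.mem_Ioi.mp hx)]
  have hIic : IntegrableOn laplacePdf (Set.Iic (0:ℝ)) := by
    refine IntegrableOn.congr_fun ((integrableOn_exp_Iic 0).const_mul (1 / 2))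
      (fun x hx => ?_) measurableSet_Iic
    simp [laplacePdf, abs_of_nonpos (Set.mem_Iic.mp hx)]
  have := hIic.union hIoi
  rw [Set.Iic_union_Ioi] at this
  exact integrableOn_univ.mp this

lemma integral_laplacePdf : ∫ x, laplacePdf x = 1 := by
  have h : ∫ x, laplacePdf x = ∫ x : ℝ, (fun y => (1/2 : ℝ) * Real.exp (-y)) |x| := by
    simp [laplacePdf]
  rw [h, integral_comp_abs (f := fun y => (1/2 : ℝ) * Real.exp (-y)),
    integral_const_mul, integral_exp_neg_Ioi_zero]
  norm_num

lemma laplaceCdf_of_nonneg {t : ℝ} (ht : 0 ≤ t) :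
    laplaceCdf t = 1 - (1 / 2) * Real.exp (-t) := by
  have hIoi : ∫ x in Set.Ioi t, laplacePdf x = (1 / 2) * Real.exp (-t) := by
    unfold laplacePdf
    rw [setIntegral_congr_fun measurableSet_Ioi
      (g := fun u => (1 / 2 : ℝ) * Real.exp (-u)) (fun u hu => by
        have : (0:ℝ) < u := lt_of_le_of_lt ht hu
        rw [abs_of_pos this])]
    rw [integral_const_mul, integral_exp_neg_Ioi]
  have hsplit : laplaceCdf t + ∫ x in Set.Ioi t, laplacePdf x = 1 := by
    unfold laplaceCdf
    rw [← setIntegral_union (Set.Iic_disjoint_Ioi le_rfl) measurableSet_Ioi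
      integrable_laplacePdf.integrableOn integrable_laplacePdf.integrableOn,
      Set.Iic_union_Ioi, setIntegral_univ, integral_laplacePdf]
  rw [hIoi] at hsplit
  linarith

lemma abs_two_laplaceCdf_sub_one (t : ℝ) :
    |2 * laplaceCdf t - 1| = 1 - Real.exp (-|t|) := by
  rcases le_or_gt t 0 with ht | ht
  · rw [laplaceCdf_of_nonpos ht, abs_of_nonpos ht, neg_neg]
    have h1 : Real.exp t ≤ 1 := Real.exp_le_one_iff.mpr ht
    rw [abs_of_nonpos (by linarith)]
    ring
  · rw [laplaceCdf_of_nonneg ht.le, abs_of_pos ht]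
    have h1 : Real.exp (-t) ≤ 1 := Real.exp_le_one_iff.mpr (by linarith)
    rw [abs_of_nonneg (by linarith)]
    ring

/-- For the skew-Laplace family the perturbation measure has the
closed form M_TV(λ) = (1/2) · λ/(1 + |λ|). -/
theorem skew_laplace_MTV_closed_form (l : ℝ) :
    Real.sign l * ((1 / 2) * ∫ x, |2 * laplaceCdf (l * x) - 1| * laplacePdf x)
      = (1 / 2) * (l / (1 + |l|)) := by
  rcases eq_or_ne l 0 with rfl | hl
  · simp [Real.sign_zero]
  set a := |l| with ha
  have ha0 : 0 < a := abs_pos.mpr hl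
  clear_value a
  set F : ℝ → ℝ := fun y => (1 - Real.exp (-(a * y))) * ((1 / 2) * Real.exp (-y)) with hF
  have hrw : ∀ x : ℝ, |2 * laplaceCdf (l * x) - 1| * laplacePdf x = F |x| := by
    intro x
    rw [abs_two_laplaceCdf_sub_one, abs_mul, ← ha]
    simp [hF, laplacePdf]
  have hIoi : ∫ y in Set.Ioi (0:ℝ), F y = 1/2 - (1/2) * (1 + a)⁻¹ := by
    have hFeq : ∀ y : ℝ, F y = (1/2) * Real.exp (-(1 * y)) - (1/2) * Real.exp (-((1 + a) * y)) := by
      intro y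
      simp only [hF]
      rw [sub_mul, one_mul]
      congr 1
      · ring_nf
      · rw [← mul_assoc, mul_comm (Real.exp (-(a*y))) (1/2 : ℝ), mul_assoc, ← Real.exp_add]
        ring_nf
    have h1 : IntegrableOn (fun y : ℝ => (1/2 : ℝ) * Real.exp (-(1 * y))) (Set.Ioi 0) := by
      simpa only [neg_mul, IntegrableOn] using (exp_neg_integrableOn_Ioi 0 one_pos).const_mul (1/2 : ℝ)
    have h2 : IntegrableOn (fun y : ℝ => (1/2 : ℝ) * Real.exp (-((1 + a) * y))) (Set.Ioi 0) := by
      simpa only [neg_mul, IntegrableOn] using (exp_neg_integrableOn_Ioi 0 (by linarith : (0:ℝ) < 1 + a)).const_mul (1/2 : ℝ)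
    calc ∫ y in Set.Ioi (0:ℝ), F y
        = ∫ y in Set.Ioi (0:ℝ), ((1/2) * Real.exp (-(1 * y)) - (1/2) * Real.exp (-((1 + a) * y))) := by
          exact setIntegral_congr_fun measurableSet_Ioi (fun y _ => hFeq y)
      _ = (∫ y in Set.Ioi (0:ℝ), (1/2) * Real.exp (-(1 * y)))
            - ∫ y in Set.Ioi (0:ℝ), (1/2) * Real.exp (-((1 + a) * y)) := integral_sub h1 h2
      _ = 1/2 - (1/2) * (1 + a)⁻¹ := by
          rw [integral_const_mul, integral_const_mul, integral_exp_Ioi_scaled one_pos,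
            integral_exp_Ioi_scaled (by linarith : (0:ℝ) < 1 + a)]
          norm_num
  have hint : ∫ x, |2 * laplaceCdf (l * x) - 1| * laplacePdf x = a / (1 + a) := by
    calc ∫ x, |2 * laplaceCdf (l * x) - 1| * laplacePdf x
        = ∫ x, F |x| := by exact integral_congr_ae (Filter.Eventually.of_forall hrw)
      _ = 2 * ∫ y in Set.Ioi (0:ℝ), F y := integral_comp_abs (f := F)
      _ = a / (1 + a) := by
          rw [hIoi]
          field_simp
          ring
  have hsgn : Real.sign l * a = l := by
    rcases lt_or_gt_of_ne hl with h | h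
    · rw [ha, Real.sign_of_neg h, abs_of_neg h]; ring
    · rw [ha, Real.sign_of_pos h, abs_of_pos h]; ring
  have h1a : (1 + a) ≠ 0 := by positivity
  rw [hint]
  conv_rhs => rw [← hsgn]
  ring
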